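/- arXiv:1711.02921 — 2 statements merged into one kernel-verified Lean document; each statement's English description precedes it below -/
import Mathlib

section
/- Define the δ-degree of a monomial z^k z̄^l (with k ≡ l mod n, n ≥ 3) by δ(z^k z̄^l) = |k−l|/n + min(k,l), which equals (k+l)/2 − ((n−2)/(2n))|k−l|. Then for any nonnegative integers k₁,l₁,k₂,l₂ (each pair resonant), the δ-degree of the Poisson-bracket monomial satisfies δ(z^{k₁+k₂−1} z̄^{l₁+l₂−1}) ≥ δ(z^{k₁} z̄^{l₁}) + δ(z^{k₂} z̄^{l₂}) − 1. -/
/-- δ-degree of a resonant monomial `z^k z̄^l`. -/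
noncomputable def deltaDeg (n k l : ℤ) : ℚ :=
  ((k : ℚ) + l) / 2 - (((n : ℚ) - 2) / (2 * n)) * |(k : ℚ) - l|

/-- The δ-degree of the Poisson-bracket monomial satisfies
`δ(z^{k₁+k₂−1} z̄^{l₁+l₂−1}) ≥ δ(z^{k₁} z̄^{l₁}) + δ(z^{k₂} z̄^{l₂}) − 1`. -/
theorem stmt_1 (n : ℤ) (hn : 3 ≤ n)
    (k₁ l₁ k₂ l₂ : ℤ) (hk₁ : 0 ≤ k₁) (hl₁ : 0 ≤ l₁) (hk₂ : 0 ≤ k₂) (hl₂ : 0 ≤ l₂)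
    (hres₁ : n ∣ (k₁ - l₁)) (hres₂ : n ∣ (k₂ - l₂))
    (hk : 1 ≤ k₁ + k₂) (hl : 1 ≤ l₁ + l₂) :
    deltaDeg n (k₁ + k₂ - 1) (l₁ + l₂ - 1) ≥
      deltaDeg n k₁ l₁ + deltaDeg n k₂ l₂ - 1 := by
  unfold deltaDeg
  have hnq : (3 : ℚ) ≤ (n : ℚ) := by exact_mod_cast hn
  have hc : 0 ≤ ((n : ℚ) - 2) / (2 * n) := div_nonneg (by linarith) (by linarith)
  have htri : |((k₁ : ℚ) - l₁) + ((k₂ : ℚ) - l₂)| ≤ |(k₁ : ℚ) - l₁| + |(k₂ : ℚ) - l₂| :=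
    abs_add_le _ _
  have heq : ((k₁ + k₂ - 1 : ℤ) : ℚ) - ((l₁ + l₂ - 1 : ℤ) : ℚ)
      = ((k₁ : ℚ) - l₁) + ((k₂ : ℚ) - l₂) := by push_cast; ring
  rw [heq]
  push_cast
  nlinarith [mul_le_mul_of_nonneg_left htri hc]
end

section
/- Let a₀, c₀ be nonzero reals, p ≥ 3, n ≥ 3 integers, and consider the linear map L on the space of coefficient vectors (g₀, g₁, …, g_p) ∈ ℝ × ℂ^p defined by the rules: for 1 ≤ k ≤ p−1 the generator χ_k changes (g_k, g_{k+2}) by (g_k + 2 i a₀ n k α_k, g_{k+2} − 2 i n c₀ (p−1−k) α_k) for any α_k ∈ ℂ, and χ₀ changes g₂ by g₂ − 2 i n c₀ (p−1) α₀ for α₀ ∈ ℝ (leaving all other coordinates fixed). Then for every coefficient vector there exists a finite sequence of such elementary transformations after which g_k = 0 for all k ≥ 1 except possibly one index: for even p the surviving data are (g₀ ∈ ℝ real and g₂ ∈ ℝ), and for odd p the surviving data are (g₀ ∈ ℝ and g₁ ∈ ℂ). -/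
/-- One elementary normalizing transformation on coefficient vectors
`(g₀, g₁, …, g_p)` (indices beyond `p` ignored): either the move generated by
`χ_k` (`1 ≤ k ≤ p−1`, parameter `α ∈ ℂ`), which replaces `g_k` by
`g_k + 2 i a₀ n k α` and `g_{k+2}` by `g_{k+2} − 2 i n c₀ (p−1−k) α`,
or the move generated by `χ₀` (parameter `α₀ ∈ ℝ`), which replaces `g₂` by
`g₂ − 2 i n c₀ (p−1) α₀`. -/
def ElemMove (a₀ c₀ : ℝ) (n p : ℕ) (g g' : ℕ → ℂ) : Prop :=
  (∃ k : ℕ, 1 ≤ k ∧ k ≤ p - 1 ∧ ∃ α : ℂ,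
    (∀ j, j ≠ k → j ≠ k + 2 → g' j = g j) ∧
    g' k = g k + 2 * Complex.I * (a₀ : ℂ) * n * k * α ∧
    (k + 2 ≤ p → g' (k + 2) = g (k + 2) - 2 * Complex.I * n * (c₀ : ℂ) * (p - 1 - k : ℕ) * α) ∧
    (p < k + 2 → g' (k + 2) = g (k + 2))) ∨
  (∃ α₀ : ℝ,
    (∀ j, j ≠ 2 → g' j = g j) ∧
    g' 2 = g 2 - 2 * Complex.I * n * (c₀ : ℂ) * (p - 1 : ℕ) * (α₀ : ℂ))

lemma moveA (a₀ c₀ : ℝ) (ha : a₀ ≠ 0) (n p : ℕ) (hn : 3 ≤ n) (k : ℕ)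
    (hk1 : 1 ≤ k) (hk2 : k ≤ p - 1) (g : ℕ → ℂ) :
    ∃ g', ElemMove a₀ c₀ n p g g' ∧ g' k = 0 ∧
      (∀ j, j ≠ k → j ≠ k + 2 → g' j = g j) ∧
      (p < k + 2 → g' (k + 2) = g (k + 2)) := by
  have hne : (2 * Complex.I * (a₀ : ℂ) * n * k) ≠ 0 := by
    have h1 : (a₀ : ℂ) ≠ 0 := Complex.ofReal_ne_zero.mpr ha
    have h2 : (n : ℂ) ≠ 0 := Nat.cast_ne_zero.mpr (by omega)
    have h3 : (k : ℂ) ≠ 0 := Nat.cast_ne_zero.mpr (by omega)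
    simp [Complex.I_ne_zero, h1, h2, h3]
  set α : ℂ := -(g k) / (2 * Complex.I * (a₀ : ℂ) * n * k) with hα
  set g' : ℕ → ℂ := fun j =>
    if j = k then 0
    else if j = k + 2 then
      (if k + 2 ≤ p then g (k+2) - 2 * Complex.I * n * (c₀ : ℂ) * (p - 1 - k : ℕ) * α
       else g (k+2))
    else g j with hg'
  have hkk : k ≠ k + 2 := by omega
  have hother : ∀ j, j ≠ k → j ≠ k + 2 → g' j = g j := by
    intro j h1 h2; simp [hg', h1, h2]
  refine ⟨g', Or.inl ⟨k, hk1, hk2, α, hother, ?_, ?_, ?_⟩, by simp [hg'], hother, ?_⟩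
  · simp only [hg', if_pos rfl]
    rw [hα, mul_div_assoc', mul_comm _ (-g k), mul_div_assoc, div_self hne]
    ring
  · intro h; simp [hg', hkk.symm, h]
  · intro h; simp [hg', hkk.symm, Nat.not_le.mpr h]
  · intro h; simp [hg', hkk.symm, Nat.not_le.mpr h]

lemma moveB (a₀ c₀ : ℝ) (hc : c₀ ≠ 0) (n p : ℕ) (hn : 3 ≤ n) (k : ℕ)
    (hk1 : 1 ≤ k) (hk2 : k + 2 ≤ p) (g : ℕ → ℂ) :
    ∃ g', ElemMove a₀ c₀ n p g g' ∧ g' (k + 2) = 0 ∧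
      (∀ j, j ≠ k → j ≠ k + 2 → g' j = g j) := by
  have hpk : (p - 1 - k : ℕ) ≠ 0 := by omega
  have hne : (2 * Complex.I * n * (c₀ : ℂ) * ((p - 1 - k : ℕ) : ℂ)) ≠ 0 := by
    have h1 : (c₀ : ℂ) ≠ 0 := Complex.ofReal_ne_zero.mpr hc
    have h2 : (n : ℂ) ≠ 0 := Nat.cast_ne_zero.mpr (by omega)
    have h3 : ((p - 1 - k : ℕ) : ℂ) ≠ 0 := Nat.cast_ne_zero.mpr hpk
    simp [Complex.I_ne_zero, h1, h2, h3]
  set α : ℂ := g (k + 2) / (2 * Complex.I * n * (c₀ : ℂ) * ((p - 1 - k : ℕ) : ℂ)) with hα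
  set g' : ℕ → ℂ := fun j =>
    if j = k then g k + 2 * Complex.I * (a₀ : ℂ) * n * k * α
    else if j = k + 2 then 0
    else g j with hg'
  have hkk : k ≠ k + 2 := by omega
  have hother : ∀ j, j ≠ k → j ≠ k + 2 → g' j = g j := by
    intro j h1 h2; simp [hg', h1, h2]
  refine ⟨g', Or.inl ⟨k, hk1, by omega, α, hother, by simp [hg', hkk], ?_, ?_⟩,
    by simp [hg', hkk.symm], hother⟩
  · intro _; simp only [hg', if_neg hkk.symm, if_pos rfl]
    rw [if_pos trivial, hα, mul_div_assoc', mul_comm _ (g (k + 2)), mul_div_assoc, div_self hne,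
      mul_one, sub_self]
  · intro h; omega

lemma moveC (a₀ c₀ : ℝ) (hc : c₀ ≠ 0) (n p : ℕ) (hn : 3 ≤ n) (hp : 3 ≤ p)
    (g : ℕ → ℂ) :
    ∃ g', ElemMove a₀ c₀ n p g g' ∧ g' 2 = ((g 2).re : ℂ) ∧
      (∀ j, j ≠ 2 → g' j = g j) := by
  set α₀ : ℝ := (g 2).im / (2 * n * c₀ * ((p - 1 : ℕ) : ℝ)) with hα
  set g' : ℕ → ℂ := fun j => if j = 2 then ((g 2).re : ℂ) else g j with hg'
  have hother : ∀ j, j ≠ 2 → g' j = g j := by intro j h; simp [hg', h]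
  refine ⟨g', Or.inr ⟨α₀, hother, ?_⟩, by simp [hg'], hother⟩
  have h2 : (n : ℝ) ≠ 0 := Nat.cast_ne_zero.mpr (by omega)
  have h3 : ((p - 1 : ℕ) : ℝ) ≠ 0 := Nat.cast_ne_zero.mpr (by omega)
  have hD : (2 * (n : ℝ) * c₀ * ((p - 1 : ℕ) : ℝ)) ≠ 0 := by
    simp [h2, h3, hc]
  have key : (2 * (n : ℝ) * c₀ * ((p - 1 : ℕ) : ℝ)) * α₀ = (g 2).im := by
    rw [hα, mul_div_assoc', mul_comm, mul_div_assoc, div_self hD, mul_one]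
  have key2 : (2 * Complex.I * (n : ℂ) * (c₀ : ℂ) * ((p - 1 : ℕ) : ℂ) * (α₀ : ℂ))
      = ((g 2).im : ℂ) * Complex.I := by
    rw [← key]; push_cast; ring
  simp only [hg', if_pos rfl]
  rw [key2]
  apply Complex.ext <;> simp

lemma ascend (a₀ c₀ : ℝ) (ha : a₀ ≠ 0) (n p : ℕ) (hn : 3 ≤ n) (hp : 3 ≤ p) :
    ∀ m k, 1 ≤ k → p - 1 = k + 2 * m → ∀ g : ℕ → ℂ,
    ∃ g', Relation.ReflTransGen (ElemMove a₀ c₀ n p) g g' ∧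
      (∀ j, k ≤ j → j ≤ p - 1 → j % 2 = k % 2 → g' j = 0) ∧
      (∀ j, j ≤ p → (j < k ∨ j % 2 ≠ k % 2) → g' j = g j) := by
  intro m
  induction m with
  | zero =>
    intro k hk1 hkp g
    obtain ⟨g', hmv, hz, hoth, _⟩ := moveA a₀ c₀ ha n p hn k hk1 (by omega) g
    refine ⟨g', Relation.ReflTransGen.single hmv, ?_, ?_⟩
    · intro j h1 h2 h3
      have : j = k := by omega
      rwa [this]
    · intro j hj hcase
      exact hoth j (by omega) (by omega)
  | succ m ih =>
    intro k hk1 hkp g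
    obtain ⟨g1, hmv, hz, hoth, _⟩ := moveA a₀ c₀ ha n p hn k hk1 (by omega) g
    obtain ⟨g2, hrtg, hz2, hoth2⟩ := ih (k + 2) (by omega) (by omega) g1
    refine ⟨g2, Relation.ReflTransGen.head hmv hrtg, ?_, ?_⟩
    · intro j h1 h2 h3
      rcases eq_or_lt_of_le h1 with h | h
      · rw [← h]
        rw [hoth2 k (by omega) (by omega)]
        exact hz
      · exact hz2 j (by omega) h2 (by omega)
    · intro j hj hcase
      rw [hoth2 j hj (by omega)]
      exact hoth j (by omega) (by omega)

lemma descend (a₀ c₀ : ℝ) (hc : c₀ ≠ 0) (n p : ℕ) (hn : 3 ≤ n) (hp : 3 ≤ p) :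
    ∀ m k, 3 ≤ k → p = k + 2 * m → ∀ g : ℕ → ℂ,
    ∃ g', Relation.ReflTransGen (ElemMove a₀ c₀ n p) g g' ∧
      (∀ j, k ≤ j → j ≤ p → j % 2 = k % 2 → g' j = 0) ∧
      (∀ j, j ≤ p → j ≠ k - 2 → (j < k ∨ j % 2 ≠ k % 2) → g' j = g j) := by
  intro m
  induction m with
  | zero =>
    intro k hk1 hkp g
    obtain ⟨g', hmv, hz, hoth⟩ := moveB a₀ c₀ hc n p hn (k - 2) (by omega) (by omega) g
    have hk2 : k - 2 + 2 = k := by omega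
    rw [hk2] at hz hoth
    refine ⟨g', Relation.ReflTransGen.single hmv, ?_, ?_⟩
    · intro j h1 h2 h3
      have : j = k := by omega
      rwa [this]
    · intro j hj h2 hcase
      exact hoth j (by omega) (by omega)
  | succ m ih =>
    intro k hk1 hkp g
    obtain ⟨g1, hrtg, hz, hoth⟩ := ih (k + 2) (by omega) (by omega) g
    obtain ⟨g2, hmv, hz2, hoth2⟩ := moveB a₀ c₀ hc n p hn (k - 2) (by omega) (by omega) g1
    have hk2 : k - 2 + 2 = k := by omega
    rw [hk2] at hz2 hoth2
    refine ⟨g2, Relation.ReflTransGen.trans hrtg (Relation.ReflTransGen.single hmv), ?_, ?_⟩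
    · intro j h1 h2 h3
      rcases eq_or_lt_of_le h1 with h | h
      · rw [← h]; exact hz2
      · rw [hoth2 j (by omega) (by omega)]
        exact hz j (by omega) h2 (by omega)
    · intro j hj h2 hcase
      rw [hoth2 j (by omega) (by omega)]
      exact hoth j hj (by omega) (by omega)

/-- Every coefficient vector can be reduced by finitely many elementary moves
to one in the normal form: for even `p` only `g₀ ∈ ℝ` and `g₂ ∈ ℝ` survive,
for odd `p` only `g₀ ∈ ℝ` and `g₁ ∈ ℂ` survive. -/
theorem stmt_5 (a₀ c₀ : ℝ) (ha : a₀ ≠ 0) (hc : c₀ ≠ 0) (n p : ℕ)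
    (hn : 3 ≤ n) (hp : 3 ≤ p) (g : ℕ → ℂ) (hg0 : (g 0).im = 0) :
    ∃ g' : ℕ → ℂ, Relation.ReflTransGen (ElemMove a₀ c₀ n p) g g' ∧
      (g' 0).im = 0 ∧
      (Even p →
        ((g' 2).im = 0 ∧ ∀ k, 1 ≤ k → k ≤ p → k ≠ 2 → g' k = 0)) ∧
      (Odd p → ∀ k, 2 ≤ k → k ≤ p → g' k = 0) := by
  rcases Nat.even_or_odd p with hpe | hpo
  · -- p even
    have hp2 : p % 2 = 0 := Nat.even_iff.mp hpe
    obtain ⟨g1, rtg1, hz1, hoth1⟩ :=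
      ascend a₀ c₀ ha n p hn hp ((p - 2) / 2) 1 (by omega) (by omega) g
    obtain ⟨g2, rtg2, hz2, hoth2⟩ :=
      descend a₀ c₀ hc n p hn hp ((p - 4) / 2) 4 (by omega) (by omega) g1
    obtain ⟨g3, mv3, h3two, hoth3⟩ := moveC a₀ c₀ hc n p hn hp g2
    refine ⟨g3, (rtg1.trans rtg2).trans (Relation.ReflTransGen.single mv3), ?_, ?_, ?_⟩
    · rw [hoth3 0 (by omega), hoth2 0 (by omega) (by omega) (by omega),
        hoth1 0 (by omega) (by omega)]
      exact hg0
    · intro _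
      refine ⟨by rw [h3two]; exact Complex.ofReal_im _, ?_⟩
      intro k hk1 hkp hk2
      rcases Nat.even_or_odd k with hke | hko
      · have hke2 : k % 2 = 0 := Nat.even_iff.mp hke
        rw [hoth3 k hk2]
        exact hz2 k (by omega) hkp (by omega)
      · have hko2 : k % 2 = 1 := Nat.odd_iff.mp hko
        rw [hoth3 k hk2, hoth2 k hkp (by omega) (by omega)]
        exact hz1 k hk1 (by omega) (by omega)
    · intro hpo
      have := Nat.odd_iff.mp hpo
      omega
  · -- p odd
    have hp2 : p % 2 = 1 := Nat.odd_iff.mp hpo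
    obtain ⟨g1, rtg1, hz1, hoth1⟩ :=
      ascend a₀ c₀ ha n p hn hp ((p - 3) / 2) 2 (by omega) (by omega) g
    obtain ⟨g2, rtg2, hz2, hoth2⟩ :=
      descend a₀ c₀ hc n p hn hp ((p - 3) / 2) 3 (by omega) (by omega) g1
    refine ⟨g2, rtg1.trans rtg2, ?_, ?_, ?_⟩
    · rw [hoth2 0 (by omega) (by omega) (by omega), hoth1 0 (by omega) (by omega)]
      exact hg0
    · intro hpe
      have := Nat.even_iff.mp hpe
      omega
    · intro _ k hk1 hkp
      rcases Nat.even_or_odd k with hke | hko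
      · have hke2 : k % 2 = 0 := Nat.even_iff.mp hke
        rw [hoth2 k hkp (by omega) (by omega)]
        exact hz1 k hk1 (by omega) (by omega)
      · have hko2 : k % 2 = 1 := Nat.odd_iff.mp hko
        exact hz2 k (by omega) hkp (by omega)
end
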